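/- For every 0 < ε < 1, every finite set X of m points in ℝ^N, and every natural number n with n > 8·ln(m)/ε², there exists a linear map f : ℝ^N → ℝ^n such that for all u, v ∈ X: (1−ε)·‖u−v‖ ≤ ‖f(u)−f(v)‖ ≤ (1+ε)·‖u−v‖. -/

import Mathlib

open MeasureTheory Real

namespace JL

/-- standard normal pdf -/
noncomputable def phi (x : ℝ) : ℝ := (Real.sqrt (2 * π))⁻¹ * Real.exp (-x ^ 2 / 2)

lemma phi_nonneg (x : ℝ) : 0 ≤ phi x := by
  unfold phi
  positivity

lemma integrable_exp_mul_sq_mul_phi {t : ℝ} (ht : t < 1 / 2) :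
    Integrable (fun x : ℝ => Real.exp (t * x ^ 2) * phi x) := by
  have hb : 0 < 1 / 2 - t := by linarith
  have : (fun x : ℝ => Real.exp (t * x ^ 2) * phi x)
      = fun x : ℝ => (Real.sqrt (2 * π))⁻¹ * Real.exp (-(1 / 2 - t) * x ^ 2) := by
    funext x
    unfold phi
    rw [mul_comm (rexp _), mul_assoc, ← Real.exp_add]
    ring_nf
  rw [this]
  exact (integrable_exp_neg_mul_sq hb).const_mul _

lemma integral_exp_mul_sq_mul_phi {t : ℝ} (ht : t < 1 / 2) :
    ∫ x : ℝ, Real.exp (t * x ^ 2) * phi x = (Real.sqrt (1 - 2 * t))⁻¹ := by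
  have hb : 0 < 1 / 2 - t := by linarith
  have h2π : (0:ℝ) < 2 * π := by positivity
  have : (fun x : ℝ => Real.exp (t * x ^ 2) * phi x)
      = fun x : ℝ => (Real.sqrt (2 * π))⁻¹ * Real.exp (-(1 / 2 - t) * x ^ 2) := by
    funext x
    unfold phi
    rw [mul_comm (rexp _), mul_assoc, ← Real.exp_add]
    ring_nf
  rw [this, MeasureTheory.integral_const_mul, integral_gaussian,
    Real.sqrt_div (le_of_lt Real.pi_pos), Real.sqrt_mul (by norm_num : (0:ℝ) ≤ 2),
    show (1:ℝ) - 2 * t = 2 * (1 / 2 - t) by ring,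
    Real.sqrt_mul (by norm_num : (0:ℝ) ≤ 2)]
  have hπ : Real.sqrt π ≠ 0 := by positivity
  have h2 : Real.sqrt 2 ≠ 0 := by positivity
  have hb' : Real.sqrt (1 / 2 - t) ≠ 0 := by positivity
  rw [mul_inv, mul_inv, div_eq_mul_inv,
    show (Real.sqrt 2)⁻¹ * (Real.sqrt π)⁻¹ * (Real.sqrt π * (Real.sqrt (1/2 - t))⁻¹)
      = ((Real.sqrt π)⁻¹ * Real.sqrt π) * ((Real.sqrt 2)⁻¹ * (Real.sqrt (1/2 - t))⁻¹) from by ring,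
    inv_mul_cancel₀ hπ, one_mul]

lemma integrable_phi : Integrable phi := by
  have := integrable_exp_mul_sq_mul_phi (t := 0) (by norm_num)
  refine this.congr (Filter.Eventually.of_forall fun x => ?_)
  simp

lemma integral_phi : ∫ x : ℝ, phi x = 1 := by
  have := integral_exp_mul_sq_mul_phi (t := 0) (by norm_num)
  simpa using this


open scoped RealInnerProductSpace ENNReal NNReal

variable {N : ℕ}

noncomputable def G (N : ℕ) (x : EuclideanSpace ℝ (Fin N)) : ℝ≥0 :=
  Real.toNNReal ((Real.sqrt (2 * π))⁻¹ ^ N * Real.exp (-‖x‖ ^ 2 / 2))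

lemma G_coe (x : EuclideanSpace ℝ (Fin N)) :
    (G N x : ℝ) = (Real.sqrt (2 * π))⁻¹ ^ N * Real.exp (-‖x‖ ^ 2 / 2) :=
  Real.coe_toNNReal _ (by positivity)

lemma measurable_G : Measurable (G N) := by
  have h : Continuous fun x : EuclideanSpace ℝ (Fin N) =>
      (Real.sqrt (2 * π))⁻¹ ^ N * Real.exp (-‖x‖ ^ 2 / 2) := by
    fun_prop
  exact (continuous_real_toNNReal.comp h).measurable

lemma G_prod (x : EuclideanSpace ℝ (Fin N)) :
    (G N x : ℝ) = ∏ j, phi (x j) := by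
  rw [G_coe]
  have hnorm : ‖x‖ ^ 2 = ∑ j, (x j) ^ 2 := by
    rw [EuclideanSpace.norm_eq, Real.sq_sqrt (by positivity)]
    simp [sq_abs]
  rw [hnorm]
  unfold phi
  rw [Finset.prod_mul_distrib, Finset.prod_const, ← Real.exp_sum]
  simp [Finset.sum_div, neg_div, Finset.sum_neg_distrib]

/-- the standard Gaussian measure on Euclidean space -/
noncomputable def gauss (N : ℕ) : MeasureTheory.Measure (EuclideanSpace ℝ (Fin N)) :=
  MeasureTheory.volume.withDensity fun x => (G N x : ℝ≥0∞)

/-- transfer of integrals from Euclidean space to the pi type -/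
lemma integral_euc (f : EuclideanSpace ℝ (Fin N) → ℝ) :
    ∫ x, f x = ∫ z : Fin N → ℝ, f ((MeasurableEquiv.toLp 2 (Fin N → ℝ)).symm.symm z) :=
  ((MeasurePreserving.symm _
      (EuclideanSpace.volume_preserving_symm_measurableEquiv_toLp (Fin N))).integral_comp'
    (f := (MeasurableEquiv.toLp 2 (Fin N → ℝ)).symm.symm) f).symm

lemma integrable_euc_iff (f : EuclideanSpace ℝ (Fin N) → ℝ) :
    MeasureTheory.Integrable f ↔
      MeasureTheory.Integrable
        (fun z : Fin N → ℝ => f ((MeasurableEquiv.toLp 2 (Fin N → ℝ)).symm.symm z)) := by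
  rw [← MeasurePreserving.integrable_comp_emb
    (MeasurePreserving.symm _ (EuclideanSpace.volume_preserving_symm_measurableEquiv_toLp (Fin N)))
    (MeasurableEquiv.measurableEmbedding _)]
  rfl

lemma euc_symm_apply (z : Fin N → ℝ) (j : Fin N) :
    ((MeasurableEquiv.toLp 2 (Fin N → ℝ)).symm.symm z) j = z j := rfl

lemma integrable_G : MeasureTheory.Integrable (fun x : EuclideanSpace ℝ (Fin N) => (G N x : ℝ)) := by
  rw [integrable_euc_iff]
  have : (fun z : Fin N → ℝ => ((G N ((MeasurableEquiv.toLp 2 (Fin N → ℝ)).symm.symm z)) : ℝ))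
      = fun z : Fin N → ℝ => ∏ j, phi (z j) := by
    funext z
    rw [G_prod]
    rfl
  rw [this]
  exact MeasureTheory.Integrable.fintype_prod (f := fun _ : Fin N => phi)
    (fun _ => integrable_exp_mul_sq_mul_phi (t := 0) (by norm_num) |>.congr
      (by filter_upwards with x; simp))

lemma integral_G_eq_one : ∫ x : EuclideanSpace ℝ (Fin N), (G N x : ℝ) = 1 := by
  rw [integral_euc]
  have : (fun z : Fin N → ℝ => ((G N ((MeasurableEquiv.toLp 2 (Fin N → ℝ)).symm.symm z)) : ℝ))
      = fun z : Fin N → ℝ => ∏ j, phi (z j) := by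
    funext z
    rw [G_prod]
    rfl
  rw [this, MeasureTheory.integral_fintype_prod_volume_eq_prod (f := fun _ : Fin N => phi)]
  simp [integral_phi]

instance : MeasureTheory.IsProbabilityMeasure (gauss N) := by
  constructor
  rw [gauss, MeasureTheory.withDensity_apply _ MeasurableSet.univ,
    MeasureTheory.setLIntegral_univ]
  have h1 : ∀ x : EuclideanSpace ℝ (Fin N), ((G N x : ℝ≥0) : ℝ≥0∞)
      = ENNReal.ofReal ((G N x : ℝ)) := fun x => (ENNReal.ofReal_coe_nnreal).symm
  simp_rw [h1]
  rw [← MeasureTheory.ofReal_integral_eq_lintegral_ofReal integrable_G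
    (Filter.Eventually.of_forall fun x => (G N x).2), integral_G_eq_one]
  simp

/-- The integrand for one row. -/
noncomputable def rowFn (D : EuclideanSpace ℝ (Fin N)) (t : ℝ)
    (x : EuclideanSpace ℝ (Fin N)) : ℝ :=
  Real.exp (t * ⟪D, x⟫ ^ 2)

lemma rowFn_nonneg (D : EuclideanSpace ℝ (Fin N)) (t : ℝ) (x : EuclideanSpace ℝ (Fin N)) :
    0 ≤ rowFn D t x := Real.exp_nonneg _

/-- Rotation: any unit vector can be mapped to a coordinate vector by an orthonormal basis. -/
lemma exists_onb (D : EuclideanSpace ℝ (Fin N)) (hD : ‖D‖ = 1) :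
    ∃ (j₀ : Fin N) (b : OrthonormalBasis (Fin N) ℝ (EuclideanSpace ℝ (Fin N))), b j₀ = D := by
  have hN : N ≠ 0 := by
    rintro rfl
    have : D = 0 := Subsingleton.elim _ _
    rw [this, norm_zero] at hD
    norm_num at hD
  refine ⟨⟨0, Nat.pos_of_ne_zero hN⟩, ?_⟩
  have hcard : Module.finrank ℝ (EuclideanSpace ℝ (Fin N)) = Fintype.card (Fin N) := by
    simp
  have horth : Orthonormal ℝ (Set.restrict {(⟨0, Nat.pos_of_ne_zero hN⟩ : Fin N)}
      (fun _ : Fin N => D)) := by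
    constructor
    · intro i
      exact hD
    · intro i j hij
      exact absurd (Subsingleton.elim i j) hij
  obtain ⟨b, hb⟩ := horth.exists_orthonormalBasis_extension_of_card_eq hcard
  exact ⟨b, hb _ rfl⟩


/-- coordinate factor functions -/
noncomputable def fj (j₀ : Fin N) (t : ℝ) (j : Fin N) (x : ℝ) : ℝ :=
  if j = j₀ then Real.exp (t * x ^ 2) * phi x else phi x

lemma fj_eq (j₀ : Fin N) (t : ℝ) (z : Fin N → ℝ) :
    (∏ j, phi (z j)) * Real.exp (t * (z j₀) ^ 2) = ∏ j, fj j₀ t j (z j) := by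
  have hdiff : ∏ j ∈ Finset.univ \ {j₀}, fj j₀ t j (z j)
      = ∏ j ∈ Finset.univ \ {j₀}, phi (z j) :=
    Finset.prod_congr rfl fun j hj => by
      unfold fj
      rw [if_neg (Finset.notMem_singleton.mp (Finset.mem_sdiff.mp hj).2)]
  rw [Finset.prod_eq_mul_prod_sdiff_singleton_of_mem (Finset.mem_univ j₀) (fun j => fj j₀ t j (z j)),
    Finset.prod_eq_mul_prod_sdiff_singleton_of_mem (Finset.mem_univ j₀) (fun j => phi (z j)), hdiff]
  unfold fj
  rw [if_pos rfl]
  ring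

lemma integrable_fj (j₀ : Fin N) {t : ℝ} (ht : t < 1 / 2) (j : Fin N) :
    MeasureTheory.Integrable (fj j₀ t j) := by
  unfold fj
  by_cases hj : j = j₀
  · simp only [if_pos hj]
    exact integrable_exp_mul_sq_mul_phi ht
  · simp only [if_neg hj]
    exact integrable_phi

lemma fj_self (j₀ : Fin N) (t : ℝ) :
    fj j₀ t j₀ = fun x => Real.exp (t * x ^ 2) * phi x := by
  funext x
  unfold fj
  rw [if_pos rfl]

lemma fj_ne (j₀ : Fin N) (t : ℝ) {j : Fin N} (hj : j ≠ j₀) : fj j₀ t j = phi := by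
  funext x
  unfold fj
  rw [if_neg hj]

lemma integral_fj_prod (j₀ : Fin N) {t : ℝ} (ht : t < 1 / 2) :
    ∫ z : Fin N → ℝ, ∏ j, fj j₀ t j (z j) = (Real.sqrt (1 - 2 * t))⁻¹ := by
  rw [MeasureTheory.integral_fintype_prod_volume_eq_prod (f := fj j₀ t)]
  rw [Finset.prod_eq_single j₀
    (fun j _ hj => by rw [fj_ne j₀ t hj]; exact integral_phi)
    (fun h => absurd (Finset.mem_univ j₀) h)]
  rw [fj_self j₀ t]
  exact integral_exp_mul_sq_mul_phi ht

lemma integral_rowFn {D : EuclideanSpace ℝ (Fin N)} (hD : ‖D‖ = 1) {t : ℝ} (ht : t < 1 / 2) :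
    ∫ x, rowFn D t x ∂(gauss N) = (Real.sqrt (1 - 2 * t))⁻¹ := by
  obtain ⟨j₀, b, hb⟩ := exists_onb D hD
  -- pass to density
  rw [gauss, integral_withDensity_eq_integral_smul measurable_G]
  -- rotate
  have key : ∀ x : EuclideanSpace ℝ (Fin N),
      G N x • rowFn D t x
        = (fun y : EuclideanSpace ℝ (Fin N) => (G N y : ℝ) * Real.exp (t * (y j₀) ^ 2))
            (b.measurableEquiv x) := by
    intro x
    have h1 : (b.measurableEquiv x : EuclideanSpace ℝ (Fin N)) = b.repr x := rfl
    have h2 : ‖(b.repr x : EuclideanSpace ℝ (Fin N))‖ = ‖x‖ := b.repr.norm_map x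
    have h3 : (b.repr x : EuclideanSpace ℝ (Fin N)) j₀ = ⟪D, x⟫ := by
      rw [b.repr_apply_apply, hb]
    have hG : G N (b.repr x) = G N x := by unfold G; rw [h2]
    simp only [h1, NNReal.smul_def, smul_eq_mul, rowFn, hG, h3]
  rw [funext key]
  trans ((∫ y : EuclideanSpace ℝ (Fin N), (G N y : ℝ) * Real.exp (t * (y j₀) ^ 2)) : ℝ)
  · exact MeasurePreserving.integral_comp' b.measurePreserving_measurableEquiv
      (fun y : EuclideanSpace ℝ (Fin N) => (G N y : ℝ) * Real.exp (t * (y j₀) ^ 2))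
  -- pass to the pi type
  rw [integral_euc]
  have expand : (fun z : Fin N → ℝ =>
      ((G N ((MeasurableEquiv.toLp 2 (Fin N → ℝ)).symm.symm z) : ℝ)
        * Real.exp (t * (((MeasurableEquiv.toLp 2 (Fin N → ℝ)).symm.symm z) j₀) ^ 2)))
      = fun z : Fin N → ℝ => ∏ j, fj j₀ t j (z j) := by
    funext z
    rw [G_prod]
    exact fj_eq j₀ t z
  rw [expand, integral_fj_prod j₀ ht]

lemma integrable_rowFn {D : EuclideanSpace ℝ (Fin N)} (hD : ‖D‖ = 1) {t : ℝ} (ht : t < 1 / 2) :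
    MeasureTheory.Integrable (rowFn D t) (gauss N) := by
  obtain ⟨j₀, b, hb⟩ := exists_onb D hD
  rw [gauss, MeasureTheory.integrable_withDensity_iff_integrable_smul measurable_G]
  have key : ∀ x : EuclideanSpace ℝ (Fin N),
      G N x • rowFn D t x
        = (fun y : EuclideanSpace ℝ (Fin N) => (G N y : ℝ) * Real.exp (t * (y j₀) ^ 2))
            (b.measurableEquiv x) := by
    intro x
    have h1 : (b.measurableEquiv x : EuclideanSpace ℝ (Fin N)) = b.repr x := rfl
    have h2 : ‖(b.repr x : EuclideanSpace ℝ (Fin N))‖ = ‖x‖ := b.repr.norm_map x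
    have h3 : (b.repr x : EuclideanSpace ℝ (Fin N)) j₀ = ⟪D, x⟫ := by
      rw [b.repr_apply_apply, hb]
    have hG : G N (b.repr x) = G N x := by unfold G; rw [h2]
    simp only [h1, NNReal.smul_def, smul_eq_mul, rowFn, hG, h3]
  rw [funext key]
  refine (MeasurePreserving.integrable_comp_emb
    (g := fun y : EuclideanSpace ℝ (Fin N) => ((G N y : ℝ)) * Real.exp (t * (y j₀) ^ 2))
    b.measurePreserving_measurableEquiv
    (MeasurableEquiv.measurableEmbedding _)).mpr ?_
  rw [integrable_euc_iff]
  have expand : (fun z : Fin N → ℝ =>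
      ((G N ((MeasurableEquiv.toLp 2 (Fin N → ℝ)).symm.symm z) : ℝ)
        * Real.exp (t * (((MeasurableEquiv.toLp 2 (Fin N → ℝ)).symm.symm z) j₀) ^ 2)))
      = fun z : Fin N → ℝ => ∏ j, fj j₀ t j (z j) := by
    funext z
    rw [G_prod]
    exact fj_eq j₀ t z
  rw [expand]
  exact MeasureTheory.Integrable.fintype_prod (f := fj j₀ t) (integrable_fj j₀ ht)
section PiProd

open MeasureTheory

variable {α : Type*} [MeasurableSpace α]

lemma pi_integrable {k : ℕ} (ν : Measure α) [IsProbabilityMeasure ν] {F : α → ℝ}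
    (hF : Integrable F ν) :
    Integrable (fun x : Fin k → α => ∏ i, F (x i)) (Measure.pi fun _ => ν) := by
  induction k with
  | zero =>
      simp only [Finset.univ_eq_empty, Finset.prod_empty]
      exact integrable_const _
  | succ k ih =>
      have h := ((measurePreserving_piFinSuccAbove (fun _ : Fin (k + 1) => ν) 0).symm)
      rw [← h.integrable_comp_emb (MeasurableEquiv.measurableEmbedding _)]
      simp_rw [MeasurableEquiv.piFinSuccAbove_symm_apply, Fin.insertNthEquiv,
        Fin.prod_univ_succ, Fin.insertNth_zero]
      simp only [Fin.zero_succAbove, Function.comp_def, Fin.cons_zero, Fin.cons_succ,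
        Equiv.coe_fn_mk]
      exact Integrable.mul_prod hF ih

lemma pi_integral {k : ℕ} (ν : Measure α) [IsProbabilityMeasure ν] {F : α → ℝ}
    (hF : Integrable F ν) :
    ∫ x : Fin k → α, ∏ i, F (x i) ∂(Measure.pi fun _ => ν) = (∫ a, F a ∂ν) ^ k := by
  induction k with
  | zero => simp
  | succ k ih =>
      calc
        _ = ∫ x : α × (Fin k → α), F x.1 * ∏ i : Fin k, F (x.2 i)
            ∂(ν.prod (Measure.pi fun _ => ν)) := by
          rw [← ((measurePreserving_piFinSuccAbove
            (fun _ : Fin (k + 1) => ν) 0).symm).integral_comp']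
          simp_rw [MeasurableEquiv.piFinSuccAbove_symm_apply, Fin.insertNthEquiv,
            Fin.prod_univ_succ, Fin.insertNth_zero]
          simp only [Fin.zero_succAbove, cast_eq, Fin.cons_zero, Fin.cons_succ, Equiv.coe_fn_mk]
        _ = (∫ a, F a ∂ν) * ∫ x : Fin k → α, ∏ i, F (x i) ∂(Measure.pi fun _ => ν) := by
          rw [← integral_prod_mul]
        _ = (∫ a, F a ∂ν) ^ (k + 1) := by rw [ih, pow_succ, mul_comm]

end PiProd

section Rows

open MeasureTheory

variable {N n : ℕ}

/-- product Gaussian measure over the rows -/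
noncomputable def rowsMeasure (N n : ℕ) : Measure (Fin n → EuclideanSpace ℝ (Fin N)) :=
  Measure.pi fun _ => gauss N

instance : IsProbabilityMeasure (rowsMeasure N n) := by
  unfold rowsMeasure; infer_instance

/-- the squared norm statistic -/
noncomputable def S (D : EuclideanSpace ℝ (Fin N)) (ω : Fin n → EuclideanSpace ℝ (Fin N)) : ℝ :=
  ∑ i, ⟪D, ω i⟫ ^ 2

lemma exp_S (D : EuclideanSpace ℝ (Fin N)) (t : ℝ) (ω : Fin n → EuclideanSpace ℝ (Fin N)) :
    Real.exp (t * S D ω) = ∏ i, rowFn D t (ω i) := by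
  unfold S rowFn
  rw [Finset.mul_sum, Real.exp_sum]

lemma integrable_exp_S {D : EuclideanSpace ℝ (Fin N)} (hD : ‖D‖ = 1) {t : ℝ} (ht : t < 1 / 2) :
    Integrable (fun ω : Fin n → EuclideanSpace ℝ (Fin N) => Real.exp (t * S D ω))
      (rowsMeasure N n) := by
  have := pi_integrable (k := n) (gauss N) (integrable_rowFn hD ht)
  refine this.congr (Filter.Eventually.of_forall fun ω => ?_)
  exact (exp_S D t ω).symm

lemma integral_exp_S {D : EuclideanSpace ℝ (Fin N)} (hD : ‖D‖ = 1) {t : ℝ} (ht : t < 1 / 2) :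
    ∫ ω, Real.exp (t * S D ω) ∂(rowsMeasure N n) = ((Real.sqrt (1 - 2 * t))⁻¹) ^ n := by
  have h1 : (fun ω : Fin n → EuclideanSpace ℝ (Fin N) => Real.exp (t * S D ω))
      = fun ω => ∏ i, rowFn D t (ω i) := funext fun ω => exp_S D t ω
  rw [h1, rowsMeasure, pi_integral (gauss N) (integrable_rowFn hD ht), integral_rowFn hD ht]

/-- Chernoff upper tail -/
lemma tail_upper {D : EuclideanSpace ℝ (Fin N)} (hD : ‖D‖ = 1) {t : ℝ} (ht0 : 0 < t)
    (ht : t < 1 / 2) (a : ℝ) :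
    ((rowsMeasure N n) {ω | a ≤ S D ω}).toReal
      ≤ Real.exp (-(t * a)) * ((Real.sqrt (1 - 2 * t))⁻¹) ^ n := by
  have hsub : {ω : Fin n → EuclideanSpace ℝ (Fin N) | a ≤ S D ω}
      ⊆ {ω | Real.exp (t * a) ≤ Real.exp (t * S D ω)} := by
    intro ω hω
    exact Set.mem_setOf.mpr (Real.exp_le_exp.mpr (by
      exact mul_le_mul_of_nonneg_left hω ht0.le))
  have hmain := mul_meas_ge_le_integral_of_nonneg
    (μ := rowsMeasure N n)
    (f := fun ω => Real.exp (t * S D ω))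
    (Filter.Eventually.of_forall fun ω => Real.exp_nonneg _)
    (integrable_exp_S hD ht) (Real.exp (t * a))
  rw [integral_exp_S hD ht] at hmain
  have hmono : ((rowsMeasure N n) {ω | a ≤ S D ω}).toReal
      ≤ ((rowsMeasure N n) {ω | Real.exp (t * a) ≤ Real.exp (t * S D ω)}).toReal := by
    apply ENNReal.toReal_mono (measure_ne_top _ _)
    exact measure_mono hsub
  have hpos : (0:ℝ) < Real.exp (t * a) := Real.exp_pos _
  rw [Real.exp_neg]
  calc ((rowsMeasure N n) {ω | a ≤ S D ω}).toReal
      ≤ ((rowsMeasure N n) {ω | Real.exp (t * a) ≤ Real.exp (t * S D ω)}).toReal := hmono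
    _ ≤ (Real.exp (t * a))⁻¹ * ((Real.sqrt (1 - 2 * t))⁻¹) ^ n := by
        rw [← le_div_iff₀' hpos, div_eq_inv_mul] at hmain
        exact hmain
    _ = _ := rfl

/-- Chernoff lower tail -/
lemma tail_lower {D : EuclideanSpace ℝ (Fin N)} (hD : ‖D‖ = 1) {s : ℝ} (hs0 : 0 < s) (a : ℝ) :
    ((rowsMeasure N n) {ω | S D ω ≤ a}).toReal
      ≤ Real.exp (s * a) * ((Real.sqrt (1 + 2 * s))⁻¹) ^ n := by
  have ht : -s < 1 / 2 := by linarith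
  have hsub : {ω : Fin n → EuclideanSpace ℝ (Fin N) | S D ω ≤ a}
      ⊆ {ω | Real.exp (-s * a) ≤ Real.exp (-s * S D ω)} := by
    intro ω hω
    refine Set.mem_setOf.mpr (Real.exp_le_exp.mpr ?_)
    have := mul_le_mul_of_nonneg_left hω hs0.le
    nlinarith
  have hmain := mul_meas_ge_le_integral_of_nonneg
    (μ := rowsMeasure N n)
    (f := fun ω => Real.exp (-s * S D ω))
    (Filter.Eventually.of_forall fun ω => Real.exp_nonneg _)
    (integrable_exp_S hD ht) (Real.exp (-s * a))
  rw [integral_exp_S hD ht] at hmain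
  have hmono : ((rowsMeasure N n) {ω | S D ω ≤ a}).toReal
      ≤ ((rowsMeasure N n) {ω | Real.exp (-s * a) ≤ Real.exp (-s * S D ω)}).toReal := by
    apply ENNReal.toReal_mono (measure_ne_top _ _)
    exact measure_mono hsub
  have hpos : (0:ℝ) < Real.exp (-s * a) := Real.exp_pos _
  have h12 : 1 - 2 * (-s) = 1 + 2 * s := by ring
  calc ((rowsMeasure N n) {ω | S D ω ≤ a}).toReal
      ≤ ((rowsMeasure N n) {ω | Real.exp (-s * a) ≤ Real.exp (-s * S D ω)}).toReal := hmono
    _ ≤ (Real.exp (-s * a))⁻¹ * ((Real.sqrt (1 - 2 * (-s)))⁻¹) ^ n := by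
        rw [← le_div_iff₀' hpos, div_eq_inv_mul] at hmain
        exact hmain
    _ = Real.exp (s * a) * ((Real.sqrt (1 + 2 * s))⁻¹) ^ n := by
        rw [h12, ← Real.exp_neg]
        ring_nf

end Rows
section Numeric

open MeasureTheory

variable {N n : ℕ}

lemma upper_bad {D : EuclideanSpace ℝ (Fin N)} (hD : ‖D‖ = 1) {ε : ℝ} (hε0 : 0 < ε)
    (hε1 : ε < 1) :
    ((rowsMeasure N n) {ω | (1 + ε) ^ 2 * n ≤ S D ω}).toReal
      ≤ Real.exp (-((n : ℝ) * ε ^ 2 / 2)) := by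
  have h1ε : (0:ℝ) < 1 + ε := by linarith
  have hsq : (0:ℝ) < (1 + ε) ^ 2 := by positivity
  set t : ℝ := (1 - ((1 + ε) ^ 2)⁻¹) / 2 with ht_def
  have hinv1 : ((1 + ε) ^ 2)⁻¹ < 1 := by
    rw [inv_lt_one_iff₀]
    right
    nlinarith
  have ht0 : 0 < t := by rw [ht_def]; linarith
  have ht : t < 1 / 2 := by
    rw [ht_def]
    have : (0:ℝ) < ((1 + ε) ^ 2)⁻¹ := by positivity
    linarith
  have h12t : 1 - 2 * t = ((1 + ε) ^ 2)⁻¹ := by rw [ht_def]; ring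
  have hsqrt : (Real.sqrt (1 - 2 * t))⁻¹ = 1 + ε := by
    rw [h12t, Real.sqrt_inv, Real.sqrt_sq h1ε.le, inv_inv]
  have key := tail_upper (n := n) hD ht0 ht ((1 + ε) ^ 2 * n)
  rw [hsqrt] at key
  refine key.trans ?_
  have hpow : (1 + ε) ^ n ≤ Real.exp ((n : ℝ) * ε) := by
    rw [Real.exp_nat_mul]
    exact pow_le_pow_left₀ h1ε.le (Real.add_one_le_exp ε |>.trans_eq' (by ring)) n
  calc Real.exp (-(t * ((1 + ε) ^ 2 * n))) * (1 + ε) ^ n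
      ≤ Real.exp (-(t * ((1 + ε) ^ 2 * n))) * Real.exp ((n : ℝ) * ε) :=
        mul_le_mul_of_nonneg_left hpow (Real.exp_nonneg _)
    _ = Real.exp (-(t * ((1 + ε) ^ 2 * n)) + (n : ℝ) * ε) := (Real.exp_add _ _).symm
    _ = Real.exp (-((n : ℝ) * ε ^ 2 / 2)) := by
        congr 1
        rw [ht_def]
        field_simp
        ring

lemma lower_bad {D : EuclideanSpace ℝ (Fin N)} (hD : ‖D‖ = 1) {ε : ℝ} (hε0 : 0 < ε)
    (hε1 : ε < 1) :
    ((rowsMeasure N n) {ω | S D ω ≤ (1 - ε) ^ 2 * n}).toReal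
      ≤ Real.exp (-((n : ℝ) * ε ^ 2 / 2)) := by
  have h1ε : (0:ℝ) < 1 - ε := by linarith
  have hsq : (0:ℝ) < (1 - ε) ^ 2 := by positivity
  set s : ℝ := (((1 - ε) ^ 2)⁻¹ - 1) / 2 with hs_def
  have hinv1 : 1 < ((1 - ε) ^ 2)⁻¹ := by
    rw [lt_inv_comm₀ zero_lt_one hsq]
    nlinarith
  have hs0 : 0 < s := by rw [hs_def]; linarith
  have h12s : 1 + 2 * s = ((1 - ε) ^ 2)⁻¹ := by rw [hs_def]; ring
  have hsqrt : (Real.sqrt (1 + 2 * s))⁻¹ = 1 - ε := by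
    rw [h12s, Real.sqrt_inv, Real.sqrt_sq h1ε.le, inv_inv]
  have key := tail_lower (n := n) hD hs0 ((1 - ε) ^ 2 * n)
  rw [hsqrt] at key
  refine key.trans ?_
  have hpow : (1 - ε) ^ n ≤ Real.exp (-((n : ℝ) * ε)) := by
    have h2 : 1 - ε ≤ Real.exp (-ε) := (Real.add_one_le_exp (-ε)).trans_eq' (by ring)
    calc (1 - ε) ^ n ≤ (Real.exp (-ε)) ^ n := pow_le_pow_left₀ h1ε.le h2 n
      _ = Real.exp (-((n : ℝ) * ε)) := by
          rw [← Real.exp_nat_mul]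
          ring_nf
  calc Real.exp (s * ((1 - ε) ^ 2 * n)) * (1 - ε) ^ n
      ≤ Real.exp (s * ((1 - ε) ^ 2 * n)) * Real.exp (-((n : ℝ) * ε)) :=
        mul_le_mul_of_nonneg_left hpow (Real.exp_nonneg _)
    _ = Real.exp (s * ((1 - ε) ^ 2 * n) + -((n : ℝ) * ε)) := (Real.exp_add _ _).symm
    _ = Real.exp (-((n : ℝ) * ε ^ 2 / 2)) := by
        congr 1
        rw [hs_def]
        field_simp
        ring

/-- per-pair bad event bound, at the `ℝ≥0∞` level -/
lemma bad_pair_bound {D : EuclideanSpace ℝ (Fin N)} (hD : ‖D‖ = 1) {ε : ℝ} (hε0 : 0 < ε)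
    (hε1 : ε < 1) :
    (rowsMeasure N n) ({ω | S D ω ≤ (1 - ε) ^ 2 * n} ∪ {ω | (1 + ε) ^ 2 * n ≤ S D ω})
      ≤ ENNReal.ofReal (2 * Real.exp (-((n : ℝ) * ε ^ 2 / 2))) := by
  refine (measure_union_le _ _).trans ?_
  have h1 : (rowsMeasure N n) {ω | S D ω ≤ (1 - ε) ^ 2 * n}
      ≤ ENNReal.ofReal (Real.exp (-((n : ℝ) * ε ^ 2 / 2))) :=
    (ENNReal.le_ofReal_iff_toReal_le (measure_ne_top _ _) (Real.exp_nonneg _)).mpr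
      (lower_bad hD hε0 hε1)
  have h2 : (rowsMeasure N n) {ω | (1 + ε) ^ 2 * n ≤ S D ω}
      ≤ ENNReal.ofReal (Real.exp (-((n : ℝ) * ε ^ 2 / 2))) :=
    (ENNReal.le_ofReal_iff_toReal_le (measure_ne_top _ _) (Real.exp_nonneg _)).mpr
      (upper_bad hD hε0 hε1)
  calc _ ≤ ENNReal.ofReal (Real.exp (-((n : ℝ) * ε ^ 2 / 2)))
        + ENNReal.ofReal (Real.exp (-((n : ℝ) * ε ^ 2 / 2))) := add_le_add h1 h2
    _ = _ := by
        rw [← ENNReal.ofReal_add (Real.exp_nonneg _) (Real.exp_nonneg _)]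
        congr 1
        ring

end Numeric
end JL

open MeasureTheory JL Real
open scoped ENNReal NNReal RealInnerProductSpace

/-- Johnson–Lindenstrauss lemma (as stated in the paper, Lemma 1):
for every `0 < ε < 1`, every finite set `X` of `m` points in `ℝ^N`, and every
`n > 8·ln(m)/ε²`, there is a linear map `f : ℝ^N → ℝ^n` such that for all
`u, v ∈ X`, `(1−ε)·‖u−v‖ ≤ ‖f u − f v‖ ≤ (1+ε)·‖u−v‖`. -/
theorem johnson_lindenstrauss
    (N m n : ℕ) (ε : ℝ) (hε0 : 0 < ε) (hε1 : ε < 1)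
    (X : Finset (EuclideanSpace ℝ (Fin N))) (hX : X.card = m)
    (hn : (n : ℝ) > 8 * (Real.log m / ε ^ 2)) :
    ∃ f : EuclideanSpace ℝ (Fin N) →ₗ[ℝ] EuclideanSpace ℝ (Fin n),
      ∀ u ∈ X, ∀ v ∈ X,
        (1 - ε) * ‖u - v‖ ≤ ‖f u - f v‖ ∧ ‖f u - f v‖ ≤ (1 + ε) * ‖u - v‖ := by
  classical
  by_cases hm : m ≤ 1
  · refine ⟨0, fun u hu v hv => ?_⟩
    have huv : u = v := Finset.card_le_one.mp (hX ▸ hm) u hu v hv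
    subst huv
    simp
  -- now m ≥ 2
  push_neg at hm
  have hm2 : (2:ℝ) ≤ (m:ℝ) := by exact_mod_cast hm
  have hlogm : 0 < Real.log m := Real.log_pos (by exact_mod_cast hm)
  have hε2 : (0:ℝ) < ε ^ 2 := by positivity
  have hnpos : (0:ℝ) < n := lt_trans (by positivity) hn
  have hn0 : 0 < n := by exact_mod_cast hnpos
  -- the set of bad pairs
  set P : Finset (EuclideanSpace ℝ (Fin N) × EuclideanSpace ℝ (Fin N)) :=
    (X ×ˢ X).filter (fun p => p.1 ≠ p.2) with hP
  set Dp : EuclideanSpace ℝ (Fin N) × EuclideanSpace ℝ (Fin N) → EuclideanSpace ℝ (Fin N) :=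
    fun p => ‖p.1 - p.2‖⁻¹ • (p.1 - p.2) with hDp
  have hDnorm : ∀ p ∈ P, ‖Dp p‖ = 1 := by
    intro p hp
    have hne : p.1 - p.2 ≠ 0 := sub_ne_zero.mpr ((Finset.mem_filter.mp hp).2)
    exact norm_smul_inv_norm hne
  set Bad : EuclideanSpace ℝ (Fin N) × EuclideanSpace ℝ (Fin N) →
      Set (Fin n → EuclideanSpace ℝ (Fin N)) :=
    fun p => {ω | S (Dp p) ω ≤ (1 - ε) ^ 2 * n} ∪ {ω | (1 + ε) ^ 2 * n ≤ S (Dp p) ω} with hBad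
  -- union bound
  have hsum : (rowsMeasure N n) (⋃ p ∈ P, Bad p)
      ≤ ∑ p ∈ P, (rowsMeasure N n) (Bad p) := measure_biUnion_finset_le P Bad
  have hperpair : ∀ p ∈ P, (rowsMeasure N n) (Bad p)
      ≤ ENNReal.ofReal (2 * Real.exp (-((n : ℝ) * ε ^ 2 / 2))) := by
    intro p hp
    exact bad_pair_bound (hDnorm p hp) hε0 hε1
  have hcard : (P.card : ℝ) ≤ (m:ℝ) ^ 2 := by
    have h1 : P.card ≤ (X ×ˢ X).card := Finset.card_filter_le _ _
    have h2 : (X ×ˢ X).card = m * m := by rw [Finset.card_product, hX]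
    have : P.card ≤ m * m := h2 ▸ h1
    calc (P.card : ℝ) ≤ (m * m : ℕ) := by exact_mod_cast this
      _ = (m:ℝ) ^ 2 := by push_cast; ring
  -- numeric: total bad measure < 1
  have hexp : Real.exp (-((n : ℝ) * ε ^ 2 / 2)) < (((m:ℝ) ^ 4))⁻¹ := by
    have h8 : 8 * Real.log m < (n:ℝ) * ε ^ 2 := by
      have h := hn
      rw [gt_iff_lt, ← mul_div_assoc] at h
      exact (div_lt_iff₀ hε2).mp h
    have hlt : -((n : ℝ) * ε ^ 2 / 2) < -(4 * Real.log m) := by linarith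
    calc Real.exp (-((n : ℝ) * ε ^ 2 / 2)) < Real.exp (-(4 * Real.log m)) :=
          Real.exp_lt_exp.mpr hlt
      _ = (((m:ℝ) ^ 4))⁻¹ := by
          rw [Real.exp_neg]
          congr 1
          rw [show (4:ℝ) * Real.log m = (4:ℕ) * Real.log m by norm_num,
            Real.exp_nat_mul, Real.exp_log (by linarith)]
  have htotal_lt : (m:ℝ) ^ 2 * (2 * Real.exp (-((n : ℝ) * ε ^ 2 / 2))) < 1 := by
    have hm4 : ((m:ℝ) ^ 4) = (m:ℝ)^2 * (m:ℝ)^2 := by ring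
    have hmpos : (0:ℝ) < (m:ℝ)^2 := by positivity
    have h1 : (m:ℝ) ^ 2 * (2 * Real.exp (-((n : ℝ) * ε ^ 2 / 2)))
        < (m:ℝ) ^ 2 * (2 * (((m:ℝ) ^ 4))⁻¹) := by
      apply mul_lt_mul_of_pos_left _ hmpos
      linarith [hexp]
    have h2 : (m:ℝ) ^ 2 * (2 * (((m:ℝ) ^ 4))⁻¹) = 2 / (m:ℝ)^2 := by
      field_simp
    have h3 : 2 / (m:ℝ)^2 ≤ 1 / 2 := by
      rw [div_le_div_iff₀ hmpos (by norm_num)]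
      nlinarith
    linarith
  have hlt1 : (rowsMeasure N n) (⋃ p ∈ P, Bad p) < 1 := by
    have hsum2 : ∑ p ∈ P, (rowsMeasure N n) (Bad p)
        ≤ (P.card : ℝ≥0∞) * ENNReal.ofReal (2 * Real.exp (-((n : ℝ) * ε ^ 2 / 2))) := by
      rw [← nsmul_eq_mul]
      calc ∑ p ∈ P, (rowsMeasure N n) (Bad p)
          ≤ ∑ _p ∈ P, ENNReal.ofReal (2 * Real.exp (-((n : ℝ) * ε ^ 2 / 2))) :=
            Finset.sum_le_sum hperpair
        _ = _ := by rw [Finset.sum_const]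
    refine lt_of_le_of_lt (hsum.trans hsum2) ?_
    calc (P.card : ℝ≥0∞) * ENNReal.ofReal (2 * Real.exp (-((n : ℝ) * ε ^ 2 / 2)))
          = ENNReal.ofReal ((P.card : ℝ) * (2 * Real.exp (-((n : ℝ) * ε ^ 2 / 2)))) := by
            rw [ENNReal.ofReal_mul (by positivity : (0:ℝ) ≤ (P.card:ℝ)),
              ENNReal.ofReal_natCast]
        _ ≤ ENNReal.ofReal ((m:ℝ)^2 * (2 * Real.exp (-((n : ℝ) * ε ^ 2 / 2)))) := by
            apply ENNReal.ofReal_le_ofReal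
            apply mul_le_mul_of_nonneg_right hcard (by positivity)
        _ < 1 := by
            rw [← ENNReal.ofReal_one]
            exact ENNReal.ofReal_lt_ofReal_iff_of_nonneg (by positivity) |>.mpr htotal_lt
  -- extract a good ω
  have hne_univ : (⋃ p ∈ P, Bad p) ≠ Set.univ := by
    intro h
    rw [h, measure_univ] at hlt1
    exact lt_irrefl _ hlt1
  obtain ⟨ω, hω⟩ := Set.ne_univ_iff_exists_notMem _ |>.mp hne_univ
  have hgood : ∀ p ∈ P, (1 - ε) ^ 2 * n < S (Dp p) ω ∧ S (Dp p) ω < (1 + ε) ^ 2 * n := by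
    intro p hp
    have : ω ∉ Bad p := fun hmem => hω (Set.mem_biUnion hp hmem)
    rw [hBad, Set.mem_union] at this
    push_neg at this
    exact ⟨not_le.mp this.1, not_le.mp this.2⟩
  -- construct the linear map
  set g : EuclideanSpace ℝ (Fin N) →ₗ[ℝ] (Fin n → ℝ) :=
    LinearMap.pi (fun i => (Real.sqrt n)⁻¹ • (innerSL ℝ (ω i)).toLinearMap) with hg
  set f : EuclideanSpace ℝ (Fin N) →ₗ[ℝ] EuclideanSpace ℝ (Fin n) :=
    (WithLp.linearEquiv 2 ℝ (Fin n → ℝ)).symm.toLinearMap.comp g with hf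
  refine ⟨f, fun u hu v hv => ?_⟩
  by_cases huv : u = v
  · subst huv
    simp
  -- the interesting case
  have hpP : (u, v) ∈ P := Finset.mem_filter.mpr ⟨Finset.mem_product.mpr ⟨hu, hv⟩, huv⟩
  set w : EuclideanSpace ℝ (Fin N) := u - v with hw
  have hwne : w ≠ 0 := sub_ne_zero.mpr huv
  have hwpos : 0 < ‖w‖ := norm_pos_iff.mpr hwne
  have hfuv : f u - f v = f w := (map_sub f u v).symm
  -- coordinates of f w
  have hfcoord : ∀ i : Fin n, (f w) i = (Real.sqrt n)⁻¹ * ⟪ω i, w⟫ := by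
    intro i
    rfl
  -- squared norm
  have hfnormsq : ‖f w‖ ^ 2 = ((n:ℝ))⁻¹ * (‖w‖ ^ 2 * S (Dp (u, v)) ω) := by
    have h1 : ‖f w‖ = Real.sqrt (∑ i, ‖(f w) i‖ ^ 2) := EuclideanSpace.norm_eq (f w)
    have h2 : ‖f w‖ ^ 2 = ∑ i, ((f w) i) ^ 2 := by
      rw [h1, Real.sq_sqrt (by positivity)]
      congr 1
      funext i
      rw [Real.norm_eq_abs, sq_abs]
    rw [h2]
    have h3 : ∀ i : Fin n, ((f w) i) ^ 2 = ((n:ℝ))⁻¹ * (‖w‖ ^ 2 * ⟪Dp (u, v), ω i⟫ ^ 2) := by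
      intro i
      rw [hfcoord i]
      have hinner : ⟪ω i, w⟫ = ‖w‖ * ⟪Dp (u, v), ω i⟫ := by
        have : Dp (u, v) = ‖w‖⁻¹ • w := rfl
        rw [this, real_inner_smul_left, real_inner_comm]
        field_simp
      rw [hinner]
      have hsqrtn : ((Real.sqrt n)⁻¹) ^ 2 = ((n:ℝ))⁻¹ := by
        rw [← Real.sqrt_inv, Real.sq_sqrt (by positivity)]
      calc ((Real.sqrt n)⁻¹ * (‖w‖ * ⟪Dp (u, v), ω i⟫)) ^ 2
          = ((Real.sqrt n)⁻¹) ^ 2 * (‖w‖ ^ 2 * ⟪Dp (u, v), ω i⟫ ^ 2) := by ring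
        _ = ((n:ℝ))⁻¹ * (‖w‖ ^ 2 * ⟪Dp (u, v), ω i⟫ ^ 2) := by rw [hsqrtn]
    rw [Finset.sum_congr rfl (fun i _ => h3 i)]
    unfold S
    rw [← Finset.mul_sum, ← Finset.mul_sum]
  obtain ⟨hlow, hhigh⟩ := hgood (u, v) hpP
  have hlowsq : ((1 - ε) * ‖w‖) ^ 2 ≤ ‖f w‖ ^ 2 := by
    rw [hfnormsq]
    have : ((1 - ε) * ‖w‖) ^ 2 = ((n:ℝ))⁻¹ * (‖w‖ ^ 2 * ((1 - ε) ^ 2 * n)) := by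
      field_simp
    rw [this]
    apply mul_le_mul_of_nonneg_left _ (by positivity)
    apply mul_le_mul_of_nonneg_left hlow.le (by positivity)
  have hhighsq : ‖f w‖ ^ 2 ≤ ((1 + ε) * ‖w‖) ^ 2 := by
    rw [hfnormsq]
    have : ((1 + ε) * ‖w‖) ^ 2 = ((n:ℝ))⁻¹ * (‖w‖ ^ 2 * ((1 + ε) ^ 2 * n)) := by
      field_simp
    rw [this]
    apply mul_le_mul_of_nonneg_left _ (by positivity)
    apply mul_le_mul_of_nonneg_left hhigh.le (by positivity)
  rw [hfuv]
  constructor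
  · have h := Real.sqrt_le_sqrt hlowsq
    rwa [Real.sqrt_sq (mul_nonneg (by linarith : (0:ℝ) ≤ 1 - ε) (norm_nonneg w)),
      Real.sqrt_sq (norm_nonneg _)] at h
  · have h := Real.sqrt_le_sqrt hhighsq
    rwa [Real.sqrt_sq (norm_nonneg _),
      Real.sqrt_sq (mul_nonneg (by linarith) (norm_nonneg w))] at h
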